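/- For g ≥ 1, urSp(2g)[2] := ker(urSp(2g) → Sp(2g,ℤ/2ℤ)) is normally generated in urSp(2g) by Y_{1,1}² and Z_1, assuming that Γ_2(g) ⊂ GL(g,ℤ) is normally generated in GL(g,ℤ) by F_1. -/

import Mathlib

open Matrix

/-- The standard symplectic form matrix `J = [[0, I],[-I, 0]]`. -/
def Jmat (g : ℕ) : Matrix (Fin g ⊕ Fin g) (Fin g ⊕ Fin g) ℤ := fromBlocks 0 1 (-1) 0

/-- `Sp(2g, ℤ)` as a set of integer matrices. -/
def SpSet (g : ℕ) : Set (Matrix (Fin g ⊕ Fin g) (Fin g ⊕ Fin g) ℤ) :=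
  {X | IsUnit X.det ∧ Xᵀ * Jmat g * X = Jmat g}

/-- `urSp(2g)`: symplectic matrices with vanishing lower-left `g × g` block. -/
def urSpSet (g : ℕ) : Set (Matrix (Fin g ⊕ Fin g) (Fin g ⊕ Fin g) ℤ) :=
  {X | X ∈ SpSet g ∧ X.toBlocks₂₁ = 0}

/-- The explicit description: matrices `[[A, B],[0, ᵗA⁻¹]]` with `A` unimodular and
`A⁻¹ * B` symmetric. -/
def urSpSet' (g : ℕ) : Set (Matrix (Fin g ⊕ Fin g) (Fin g ⊕ Fin g) ℤ) :=
  {X | ∃ A B : Matrix (Fin g) (Fin g) ℤ, IsUnit A.det ∧ (A⁻¹ * B).IsSymm ∧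
    X = fromBlocks A B 0 (A⁻¹)ᵀ}

/-- `S_{i,j}`: the symmetric matrix with `1` at `(i,j)` and `(j,i)` and `0` elsewhere
(just a `1` at `(i,i)` when `i = j`). -/
def Smat (g : ℕ) (i j : Fin g) : Matrix (Fin g) (Fin g) ℤ :=
  Matrix.of fun k l => if (k = i ∧ l = j) ∨ (k = j ∧ l = i) then 1 else 0

/-- The elementary matrix `E_{i,j} = I + ℰ_{i,j}`. -/
def Emat (g : ℕ) (i j : Fin g) : Matrix (Fin g) (Fin g) ℤ := 1 + Matrix.single i j 1

/-- `F_i = I - 2 S_{i,i}`. -/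
def Fmat (g : ℕ) (i : Fin g) : Matrix (Fin g) (Fin g) ℤ := 1 - 2 • Matrix.single i i 1

/-- `A_{i,j} = I + S_{i,j} - S_{i,i} - S_{j,j}`, the transposition permutation matrix. -/
def Amat (g : ℕ) (i j : Fin g) : Matrix (Fin g) (Fin g) ℤ :=
  1 + Smat g i j - Smat g i i - Smat g j j

/-- `Y_{i,j} = [[I, S_{i,j}],[0, I]]`. -/
def Ymat (g : ℕ) (i j : Fin g) : Matrix (Fin g ⊕ Fin g) (Fin g ⊕ Fin g) ℤ :=
  fromBlocks 1 (Smat g i j) 0 1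

/-- `X_{i,j} = [[E_{i,j}, 0],[0, ᵗE_{i,j}⁻¹]]` (the paper's `-E_{j,i}` denotes `ᵗE_{i,j}⁻¹`). -/
noncomputable def Xmat (g : ℕ) (i j : Fin g) : Matrix (Fin g ⊕ Fin g) (Fin g ⊕ Fin g) ℤ :=
  fromBlocks (Emat g i j) 0 0 ((Emat g i j)⁻¹)ᵀ

/-- `Z_i = [[F_i, 0],[0, F_i]]`. -/
def Zmat (g : ℕ) (i : Fin g) : Matrix (Fin g ⊕ Fin g) (Fin g ⊕ Fin g) ℤ :=
  fromBlocks (Fmat g i) 0 0 (Fmat g i)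

/-- `S_g = {[[I, B],[0, I]] : B symmetric}`. -/
def SgSet (g : ℕ) : Set (Matrix (Fin g ⊕ Fin g) (Fin g ⊕ Fin g) ℤ) :=
  {X | ∃ B : Matrix (Fin g) (Fin g) ℤ, B.IsSymm ∧ X = fromBlocks 1 B 0 1}

/-- `GL(g, ℤ)` as the set of integer matrices with unit determinant. -/
def GLSet (g : ℕ) : Set (Matrix (Fin g) (Fin g) ℤ) := {X | IsUnit X.det}

/-- The level-`d` principal congruence subgroup `Γ_d(g)` of `GL(g, ℤ)`. -/
def GammaSet (d g : ℕ) : Set (Matrix (Fin g) (Fin g) ℤ) :=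
  {X | IsUnit X.det ∧ X.map (fun a : ℤ => (a : ZMod d)) = 1}

/-- The normal closure of `S` in the group `U` (a subset of invertible matrices),
described as the set of products of `U`-conjugates of elements of `S` and their inverses. -/
def ncl {n : Type*} [Fintype n] [DecidableEq n]
    (U S : Set (Matrix n n ℤ)) : Set (Matrix n n ℤ) :=
  ↑(Submonoid.closure {m | ∃ u ∈ U, ∃ y ∈ S, m = u * y * u⁻¹ ∨ m = u * y⁻¹ * u⁻¹})


section Aux
variable {g : ℕ}

private lemma Jt_mul_J (g : ℕ) : (Jmat g)ᵀ * Jmat g = 1 := by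
  simp [Jmat, fromBlocks_transpose, fromBlocks_multiply]

private lemma one_mem_urSp (g : ℕ) : (1 : Matrix (Fin g ⊕ Fin g) (Fin g ⊕ Fin g) ℤ) ∈ urSpSet g := by
  refine ⟨⟨by simp, by simp⟩, ?_⟩
  rw [← fromBlocks_one]
  exact toBlocks_fromBlocks₂₁ _ _ _ _

private lemma mul_mem_urSp {X Y : Matrix (Fin g ⊕ Fin g) (Fin g ⊕ Fin g) ℤ}
    (hX : X ∈ urSpSet g) (hY : Y ∈ urSpSet g) : X * Y ∈ urSpSet g := by
  obtain ⟨⟨hXd, hXJ⟩, hX21⟩ := hX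
  obtain ⟨⟨hYd, hYJ⟩, hY21⟩ := hY
  refine ⟨⟨by simp [det_mul, hXd.mul hYd], ?_⟩, ?_⟩
  · calc (X*Y)ᵀ * Jmat g * (X*Y) = Yᵀ * (Xᵀ * Jmat g * X) * Y := by
          rw [transpose_mul]; noncomm_ring
      _ = Jmat g := by rw [hXJ, hYJ]
  · rw [← fromBlocks_toBlocks X, ← fromBlocks_toBlocks Y, hX21, hY21, fromBlocks_multiply]
    simp [toBlocks_fromBlocks₂₁]

private lemma inv_mem_urSp {X : Matrix (Fin g ⊕ Fin g) (Fin g ⊕ Fin g) ℤ}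
    (hX : X ∈ urSpSet g) : X⁻¹ ∈ urSpSet g ∧ X * X⁻¹ = 1 ∧ X⁻¹ * X = 1 := by
  obtain ⟨⟨hXd, hXJ⟩, hX21⟩ := hX
  obtain ⟨Y, hY⟩ : ∃ Y, Y = (Jmat g)ᵀ * Xᵀ * Jmat g := ⟨_, rfl⟩
  have hYX : Y * X = 1 := by
    calc Y * X = (Jmat g)ᵀ * (Xᵀ * Jmat g * X) := by rw [hY]; noncomm_ring
      _ = 1 := by rw [hXJ, Jt_mul_J]
  have hXY : X * Y = 1 := mul_eq_one_comm.2 hYX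
  have hinv : X⁻¹ = Y := inv_eq_left_inv hYX
  refine ⟨⟨⟨by rw [hinv]; exact isUnit_det_of_right_inverse hYX, ?_⟩, ?_⟩, ?_, ?_⟩
  · rw [hinv]
    calc Yᵀ * Jmat g * Y = Yᵀ * (Xᵀ * Jmat g * X) * Y := by rw [hXJ]
      _ = (X*Y)ᵀ * Jmat g * (X*Y) := by rw [transpose_mul]; noncomm_ring
      _ = Jmat g := by rw [hXY]; simp
  · rw [hinv, hY, ← fromBlocks_toBlocks X, hX21, Jmat, fromBlocks_transpose,
      fromBlocks_transpose, fromBlocks_multiply, fromBlocks_multiply]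
    simp [toBlocks_fromBlocks₂₁]
  · rw [hinv]; exact hXY
  · rw [hinv]; exact hYX

end Aux


section Aux2
variable {g : ℕ}

private lemma mem_urSp_of {A B : Matrix (Fin g) (Fin g) ℤ} (hA : IsUnit A.det)
    (hs : (A⁻¹ * B).IsSymm) : fromBlocks A B 0 (A⁻¹)ᵀ ∈ urSpSet g := by
  have h1 : A⁻¹ * A = 1 := nonsing_inv_mul A hA
  refine ⟨⟨?_, ?_⟩, toBlocks_fromBlocks₂₁ _ _ _ _⟩
  · rw [det_fromBlocks_zero₂₁]
    exact (hA.mul (by rw [det_transpose]; exact A.isUnit_nonsing_inv_det hA))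
  · rw [Jmat, fromBlocks_transpose, fromBlocks_multiply, fromBlocks_multiply]
    have e1 : Aᵀ * (A⁻¹)ᵀ = 1 := by rw [← transpose_mul, h1, transpose_one]
    have e2 : Bᵀ * (A⁻¹)ᵀ = A⁻¹ * B := by rw [← transpose_mul, hs.eq]
    simp [e1, e2, h1]

private lemma urSp_decomp {X : Matrix (Fin g ⊕ Fin g) (Fin g ⊕ Fin g) ℤ}
    (hX : X ∈ urSpSet g) : ∃ A B : Matrix (Fin g) (Fin g) ℤ, IsUnit A.det ∧
      (A⁻¹ * B).IsSymm ∧ X = fromBlocks A B 0 (A⁻¹)ᵀ := by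
  obtain ⟨⟨hXd, hXJ⟩, hX21⟩ := hX
  refine ⟨X.toBlocks₁₁, X.toBlocks₁₂, ?_⟩
  obtain ⟨A, B, D, hXb⟩ : ∃ A B D, X = fromBlocks A B 0 D :=
    ⟨X.toBlocks₁₁, X.toBlocks₁₂, X.toBlocks₂₂, by rw [← hX21, fromBlocks_toBlocks X]⟩
  have hA : X.toBlocks₁₁ = A := by rw [hXb, toBlocks_fromBlocks₁₁]
  have hB : X.toBlocks₁₂ = B := by rw [hXb, toBlocks_fromBlocks₁₂]
  rw [hA, hB]
  subst hXb
  rw [Jmat, fromBlocks_transpose, fromBlocks_multiply, fromBlocks_multiply] at hXJ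
  simp only [Matrix.mul_zero, Matrix.zero_mul, Matrix.mul_one, Matrix.mul_neg,
    Matrix.neg_mul, add_zero, zero_add, Matrix.one_mul, fromBlocks_inj] at hXJ
  obtain ⟨-, h12, h21, h22⟩ := hXJ
  rw [transpose_zero, Matrix.zero_mul, neg_zero, zero_add] at h12
  have hAd : IsUnit A.det := by
    rw [← det_transpose]
    exact IsUnit.of_mul_eq_one D.det (by rw [← det_mul, h12, det_one])
  have hD : D = (A⁻¹)ᵀ := by
    rw [transpose_nonsing_inv, inv_eq_right_inv h12]
  have hBD : Bᵀ * D = Dᵀ * B := by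
    have := congrArg (fun M => M + Dᵀ * B) h22
    simpa [neg_add_cancel, sub_eq_iff_eq_add] using this
  refine ⟨hAd, ?_, by rw [hD]⟩
  rw [Matrix.IsSymm, transpose_mul, ← hD, hBD, hD]
  simp

end Aux2


section Aux3
variable {n : Type*} [Fintype n] [DecidableEq n]

private lemma mem_ncl_iff {U S : Set (Matrix n n ℤ)} {x : Matrix n n ℤ} :
    x ∈ ncl U S ↔ x ∈ Submonoid.closure
      {m | ∃ u ∈ U, ∃ y ∈ S, m = u * y * u⁻¹ ∨ m = u * y⁻¹ * u⁻¹} := Iff.rfl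

/-- elements of ncl have two-sided inverses inside ncl -/
private lemma ncl_inv_pair {U S : Set (Matrix n n ℤ)}
    (hU : ∀ u ∈ U, IsUnit u.det) (hS : ∀ y ∈ S, y * y⁻¹ = 1)
    {m : Matrix n n ℤ} (hm : m ∈ ncl U S) :
    ∃ m', m' ∈ ncl U S ∧ m * m' = 1 ∧ m' * m = 1 := by
  rw [mem_ncl_iff] at hm
  induction hm using Submonoid.closure_induction with
  | one => exact ⟨1, Submonoid.one_mem _, one_mul 1, one_mul 1⟩
  | mul a b _ _ iha ihb =>
    obtain ⟨a', ha', haa, haa'⟩ := iha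
    obtain ⟨b', hb', hbb, hbb'⟩ := ihb
    refine ⟨b' * a', Submonoid.mul_mem _ hb' ha', ?_, ?_⟩
    · calc a * b * (b' * a') = a * (b * b') * a' := by noncomm_ring
        _ = 1 := by rw [hbb, Matrix.mul_one, haa]
    · calc b' * a' * (a * b) = b' * (a' * a) * b := by noncomm_ring
        _ = 1 := by rw [haa', Matrix.mul_one, hbb']
  | mem m hmem =>
    obtain ⟨u, hu, y, hy, hcase⟩ := hmem
    have huu : u * u⁻¹ = 1 := mul_nonsing_inv u (hU u hu)
    have huu' : u⁻¹ * u = 1 := nonsing_inv_mul u (hU u hu)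
    have hyy : y * y⁻¹ = 1 := hS y hy
    have hyy' : y⁻¹ * y = 1 := mul_eq_one_comm.1 hyy
    have key : ∀ c d : Matrix n n ℤ, c * d = 1 →
        (u * c * u⁻¹) * (u * d * u⁻¹) = 1 := by
      intro c d hcd
      calc (u * c * u⁻¹) * (u * d * u⁻¹) = u * (c * (u⁻¹ * u) * d) * u⁻¹ := by noncomm_ring
        _ = 1 := by rw [huu', Matrix.mul_one, hcd, Matrix.mul_one, huu]
    rcases hcase with rfl | rfl
    · exact ⟨u * y⁻¹ * u⁻¹, Submonoid.subset_closure ⟨u, hu, y, hy, Or.inr rfl⟩,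
        key _ _ hyy, key _ _ hyy'⟩
    · exact ⟨u * y * u⁻¹, Submonoid.subset_closure ⟨u, hu, y, hy, Or.inl rfl⟩,
        key _ _ hyy', key _ _ hyy⟩

/-- ncl is stable under conjugation by U -/
private lemma ncl_conj {U S : Set (Matrix n n ℤ)}
    (hU : ∀ u ∈ U, IsUnit u.det) (hUm : ∀ a ∈ U, ∀ b ∈ U, a * b ∈ U)
    {w : Matrix n n ℤ} (hw : w ∈ U) {m : Matrix n n ℤ} (hm : m ∈ ncl U S) :
    w * m * w⁻¹ ∈ ncl U S := by
  have hww : w * w⁻¹ = 1 := mul_nonsing_inv w (hU w hw)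
  have hww' : w⁻¹ * w = 1 := nonsing_inv_mul w (hU w hw)
  rw [mem_ncl_iff] at hm ⊢
  induction hm using Submonoid.closure_induction with
  | one => rw [Matrix.mul_one, hww]; exact Submonoid.one_mem _
  | mul a b _ _ iha ihb =>
    have : w * (a * b) * w⁻¹ = (w * a * w⁻¹) * (w * b * w⁻¹) := by
      calc w * (a * b) * w⁻¹ = w * a * (w⁻¹ * w) * b * w⁻¹ := by rw [hww']; noncomm_ring
        _ = (w * a * w⁻¹) * (w * b * w⁻¹) := by noncomm_ring
    rw [this]; exact Submonoid.mul_mem _ iha ihb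
  | mem m hmem =>
    obtain ⟨u, hu, y, hy, hcase⟩ := hmem
    have hwu : (w * u)⁻¹ = u⁻¹ * w⁻¹ := Matrix.mul_inv_rev w u
    rcases hcase with rfl | rfl
    · refine Submonoid.subset_closure ⟨w * u, hUm w hw u hu, y, hy, Or.inl ?_⟩
      rw [hwu]; noncomm_ring
    · refine Submonoid.subset_closure ⟨w * u, hUm w hw u hu, y, hy, Or.inr ?_⟩
      rw [hwu]; noncomm_ring

end Aux3


section Aux4
variable {g : ℕ}

private abbrev EE (i j : Fin g) : Matrix (Fin g) (Fin g) ℤ := Matrix.single i j 1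

private lemma EE_transpose (i j : Fin g) : (EE i j)ᵀ = EE j i := by
  ext a b
  simp [Matrix.single, and_comm]

private lemma EE_mul (i j k l : Fin g) :
    EE i j * EE k l = if j = k then EE i l else 0 := by
  split
  · next h => subst h; simpa using Matrix.single_mul_single_same (c := (1:ℤ)) i j l 1
  · next h => exact Matrix.single_mul_single_of_ne (c := _) _ _ _ h _

private lemma Smat_diag (i : Fin g) : Smat g i i = EE i i := by
  ext a b
  by_cases h1 : a = i <;> by_cases h2 : b = i <;>
    simp_all [Smat, Matrix.single, eq_comm]

private lemma Smat_off {i j : Fin g} (h : i ≠ j) : Smat g i j = EE i j + EE j i := by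
  ext a b
  by_cases h1 : a = i <;> by_cases h2 : b = j <;> by_cases h3 : a = j <;> by_cases h4 : b = i <;>
    simp_all [Smat, Matrix.single, eq_comm] <;> tauto

private lemma Smat_comm (i j : Fin g) : Smat g i j = Smat g j i := by
  ext a b
  simp only [Smat, Matrix.of_apply, or_comm]

private lemma Smat_isSymm (i j : Fin g) : (Smat g i j).IsSymm := by
  ext a b
  simp only [Smat, Matrix.transpose_apply, Matrix.of_apply, or_comm, and_comm]

end Aux4


section Aux4
variable {g : ℕ}

private lemma EE_mul_same (i j l : Fin g) : EE i j * EE j l = EE i l := by simp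

private lemma EE_mul_ne {j k : Fin g} (h : j ≠ k) (i l : Fin g) : EE i j * EE k l = 0 :=
  Matrix.single_mul_single_of_ne (c := _) _ _ _ h _

private def Pmat (i j : Fin g) : Matrix (Fin g) (Fin g) ℤ :=
  1 - EE i i - EE j j + EE i j + EE j i

private lemma Pmat_mul_self {i j : Fin g} (h : i ≠ j) : Pmat i j * Pmat i j = 1 := by
  simp only [Pmat, sub_mul, mul_sub, add_mul, mul_add, one_mul, mul_one, EE_mul_same,
    EE_mul_ne h, EE_mul_ne h.symm]
  abel

private lemma Pmat_conj_diag {i j : Fin g} (h : i ≠ j) :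
    Pmat i j * (EE i i * Pmat i j) = EE j j := by
  simp only [Pmat, sub_mul, mul_sub, add_mul, mul_add, one_mul, mul_one, EE_mul_same,
    EE_mul_ne h, EE_mul_ne h.symm]
  abel

private lemma Pmat_conj_S {i j k : Fin g} (h : i ≠ j) (hki : k ≠ i) (hkj : k ≠ j) :
    Pmat i j * ((EE i k + EE k i) * Pmat i j) = EE j k + EE k j := by
  simp only [Pmat, sub_mul, mul_sub, add_mul, mul_add, one_mul, mul_one, EE_mul_same,
    EE_mul_ne h, EE_mul_ne h.symm, EE_mul_ne hki, EE_mul_ne hki.symm,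
    EE_mul_ne hkj, EE_mul_ne hkj.symm]
  abel

private lemma Umat_conj {i j : Fin g} (h : i ≠ j) :
    (1 + EE j i) * (EE i i * (1 + EE j i)ᵀ) = EE i i + EE j j + (EE i j + EE j i) := by
  have ht : (EE j i : Matrix (Fin g) (Fin g) ℤ)ᵀ = EE i j := by
    ext a b; simp [Matrix.single, and_comm]
  rw [transpose_add, transpose_one, ht]
  simp only [add_mul, mul_add, one_mul, mul_one, EE_mul_same, EE_mul_ne h, EE_mul_ne h.symm]
  abel

private lemma Umat_inv {i j : Fin g} (h : i ≠ j) :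
    (1 + EE j i) * (1 - EE j i) = 1 := by
  simp only [add_mul, mul_sub, mul_add, sub_mul, one_mul, mul_one, EE_mul_ne h]
  abel

private lemma Fmat_eq (i : Fin g) : Fmat g i = 1 - (EE i i + EE i i) := by
  rw [Fmat, two_smul]

private lemma Fmat_mul_self (i : Fin g) : Fmat g i * Fmat g i = 1 := by
  rw [Fmat_eq]
  simp only [sub_mul, mul_sub, add_mul, mul_add, one_mul, mul_one, EE_mul_same]
  abel

private lemma Fmat_transpose (i : Fin g) : (Fmat g i)ᵀ = Fmat g i := by
  rw [Fmat_eq, transpose_sub, transpose_one, transpose_add]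
  have ht : (EE i i : Matrix (Fin g) (Fin g) ℤ)ᵀ = EE i i := by
    ext a b; simp [Matrix.single, and_comm]
  rw [ht]

end Aux4


section Aux5
variable {g : ℕ}

private noncomputable def phi (u : Matrix (Fin g) (Fin g) ℤ) : Matrix (Fin g ⊕ Fin g) (Fin g ⊕ Fin g) ℤ :=
  fromBlocks u 0 0 (u⁻¹)ᵀ

private lemma phi_mem {u : Matrix (Fin g) (Fin g) ℤ} (hu : IsUnit u.det) :
    phi u ∈ urSpSet g := by
  have h0 : (u⁻¹ * 0 : Matrix (Fin g) (Fin g) ℤ).IsSymm := by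
    rw [Matrix.mul_zero]; exact isSymm_zero
  exact mem_urSp_of hu h0

private lemma phi_inv {u : Matrix (Fin g) (Fin g) ℤ} (hu : IsUnit u.det) :
    (phi u)⁻¹ = fromBlocks u⁻¹ 0 0 uᵀ := by
  apply inv_eq_right_inv
  rw [phi, fromBlocks_multiply]
  have e : (u⁻¹)ᵀ * uᵀ = 1 := by rw [← transpose_mul, mul_nonsing_inv u hu, transpose_one]
  simp [mul_nonsing_inv u hu, e]

private lemma phi_conj_upper {u : Matrix (Fin g) (Fin g) ℤ} (hu : IsUnit u.det)
    (C : Matrix (Fin g) (Fin g) ℤ) :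
    phi u * fromBlocks 1 C 0 1 * (phi u)⁻¹ = fromBlocks 1 (u * C * uᵀ) 0 1 := by
  rw [phi_inv hu, phi, fromBlocks_multiply, fromBlocks_multiply]
  have e : (u⁻¹)ᵀ * uᵀ = 1 := by rw [← transpose_mul, mul_nonsing_inv u hu, transpose_one]
  simp [mul_nonsing_inv u hu, e, Matrix.mul_assoc]

private lemma phi_conj_diag {u : Matrix (Fin g) (Fin g) ℤ} (hu : IsUnit u.det)
    (a b : Matrix (Fin g) (Fin g) ℤ) :
    phi u * fromBlocks a 0 0 b * (phi u)⁻¹ =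
      fromBlocks (u * a * u⁻¹) 0 0 ((u⁻¹)ᵀ * b * uᵀ) := by
  rw [phi_inv hu, phi, fromBlocks_multiply, fromBlocks_multiply]
  simp

end Aux5


section Aux6
variable {g : ℕ}

private lemma Pmat_transpose {i j : Fin g} : (Pmat i j)ᵀ = Pmat i j := by
  rw [Pmat, transpose_add, transpose_add, transpose_sub, transpose_sub, transpose_one,
    EE_transpose, EE_transpose, EE_transpose, EE_transpose]
  abel

private lemma mapf_mul {n : Type*} [Fintype n] [DecidableEq n] (X Y : Matrix n n ℤ) :
    (X * Y).map (fun a : ℤ => (a : ZMod 2)) =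
      X.map (fun a : ℤ => (a : ZMod 2)) * Y.map (fun a : ℤ => (a : ZMod 2)) :=
  Matrix.map_mul (f := Int.castRingHom (ZMod 2))

private lemma mapf_one {n : Type*} [Fintype n] [DecidableEq n] :
    (1 : Matrix n n ℤ).map (fun a : ℤ => (a : ZMod 2)) = 1 :=
  Matrix.map_one _ Int.cast_zero Int.cast_one

private lemma mapf_double {n : Type*} (M : Matrix n n ℤ) :
    (M + M).map (fun a : ℤ => (a : ZMod 2)) = 0 := by
  ext a b
  simp [Matrix.map_apply, CharTwo.add_self_eq_zero]

private lemma mapf_F (i : Fin g) : (Fmat g i).map (fun a : ℤ => (a : ZMod 2)) = 1 := by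
  ext a b
  simp only [Fmat_eq, Matrix.map_apply, Matrix.sub_apply, Matrix.add_apply, Matrix.one_apply,
    Matrix.single, Matrix.of_apply]
  split_ifs with h1 h2 <;> simp_all <;> decide

private lemma Ymat_sq (i j : Fin g) :
    Ymat g i j ^ 2 = fromBlocks 1 (Smat g i j + Smat g i j) 0 1 := by
  rw [pow_two, Ymat, fromBlocks_multiply]
  simp

private lemma upper_mem {C : Matrix (Fin g) (Fin g) ℤ} (hC : C.IsSymm) :
    fromBlocks 1 C 0 1 ∈ urSpSet g := by
  have := mem_urSp_of (A := (1 : Matrix (Fin g) (Fin g) ℤ)) (B := C)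
    (by simp) (by rw [inv_one, Matrix.one_mul]; exact hC)
  rwa [inv_one, transpose_one] at this

private lemma Ymat_mem (i j : Fin g) : Ymat g i j ∈ urSpSet g := upper_mem (Smat_isSymm i j)

private lemma Zmat_mem (i : Fin g) : Zmat g i ∈ urSpSet g := by
  have hdet : IsUnit (Fmat g i).det := isUnit_det_of_right_inverse (Fmat_mul_self i)
  have := mem_urSp_of (A := Fmat g i) (B := 0) hdet (by rw [Matrix.mul_zero]; exact isSymm_zero)
  rwa [inv_eq_right_inv (Fmat_mul_self i), Fmat_transpose] at this

end Aux6

/-- If `Γ_2(g)` is the normal closure of `F_1` in `GL(g, ℤ)`, then `urSp(2g)[2]` is the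
normal closure of `Y_{1,1}²` and `Z_1` in `urSp(2g)`. -/
theorem stmt14 (g : ℕ) (hg : 1 ≤ g)
    (hGamma : GammaSet 2 g = ncl (GLSet g) {Fmat g ⟨0, by omega⟩}) :
    {X | X ∈ urSpSet g ∧ X.map (fun a : ℤ => (a : ZMod 2)) = 1} =
      ncl (urSpSet g)
        {Ymat g ⟨0, by omega⟩ ⟨0, by omega⟩ ^ 2, Zmat g ⟨0, by omega⟩} := by
  classical
  have hzlt : 0 < g := hg
  set z : Fin g := ⟨0, hzlt⟩ with hzdef
  set f : ℤ → ZMod 2 := fun a : ℤ => (a : ZMod 2) with hfdef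
  -- basic facts
  have hUdet : ∀ u ∈ urSpSet g, IsUnit u.det := fun u hu => hu.1.1
  have hUmul : ∀ a ∈ urSpSet g, ∀ b ∈ urSpSet g, a * b ∈ urSpSet g :=
    fun a ha b hb => mul_mem_urSp ha hb
  have hYmem : Ymat g z z ^ 2 ∈ urSpSet g := by
    rw [pow_two]; exact mul_mem_urSp (Ymat_mem z z) (Ymat_mem z z)
  have hSmem : ∀ y ∈ ({Ymat g z z ^ 2, Zmat g z} :
      Set (Matrix (Fin g ⊕ Fin g) (Fin g ⊕ Fin g) ℤ)), y ∈ urSpSet g := by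
    rintro y (rfl | rfl)
    · exact hYmem
    · exact Zmat_mem z
  have hSinv : ∀ y ∈ ({Ymat g z z ^ 2, Zmat g z} :
      Set (Matrix (Fin g ⊕ Fin g) (Fin g ⊕ Fin g) ℤ)), y * y⁻¹ = 1 :=
    fun y hy => (inv_mem_urSp (hSmem y hy)).2.1
  have hSmap : ∀ y ∈ ({Ymat g z z ^ 2, Zmat g z} :
      Set (Matrix (Fin g ⊕ Fin g) (Fin g ⊕ Fin g) ℤ)), y.map f = 1 := by
    rintro y (rfl | rfl)
    · rw [Ymat_sq, fromBlocks_map, mapf_double, mapf_one (n := Fin g)]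
      have : ((0 : Matrix (Fin g) (Fin g) ℤ)).map f = 0 := by ext a b; simp [hfdef]
      rw [this, fromBlocks_one]
    · rw [Zmat, fromBlocks_map, mapf_F]
      have : ((0 : Matrix (Fin g) (Fin g) ℤ)).map f = 0 := by ext a b; simp [hfdef]
      rw [this, fromBlocks_one]
  apply Set.eq_of_subset_of_subset
  · -- hard direction
    intro X hX
    obtain ⟨hXur, hXmap⟩ := hX
    obtain ⟨A, B, hA, hsymm, rfl⟩ := urSp_decomp hXur
    rw [fromBlocks_map,
      show (1 : Matrix (Fin g ⊕ Fin g) (Fin g ⊕ Fin g) (ZMod 2)) = fromBlocks 1 0 0 1 from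
        fromBlocks_one.symm] at hXmap
    obtain ⟨hA2, hB2, -, -⟩ := fromBlocks_inj.mp hXmap
    have hAGamma : A ∈ ncl (GLSet g) {Fmat g ⟨0, by omega⟩} := by
      rw [← hGamma]; exact ⟨hA, hA2⟩
    -- Step 1: the diagonal part is in the normal closure
    have step1 : ∀ m : Matrix (Fin g) (Fin g) ℤ,
        m ∈ ncl (GLSet g) {Fmat g ⟨0, by omega⟩} →
        ∃ m', m * m' = 1 ∧ m' * m = 1 ∧
          fromBlocks m 0 0 m'ᵀ ∈ ncl (urSpSet g) {Ymat g z z ^ 2, Zmat g z} := by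
      intro m hm
      rw [mem_ncl_iff] at hm
      induction hm using Submonoid.closure_induction with
      | one =>
        refine ⟨1, Matrix.one_mul 1, Matrix.one_mul 1, ?_⟩
        rw [transpose_one, fromBlocks_one]
        exact Submonoid.one_mem _
      | mul a b _ _ iha ihb =>
        obtain ⟨a', haa, haa', hamem⟩ := iha
        obtain ⟨b', hbb, hbb', hbmem⟩ := ihb
        refine ⟨b' * a', ?_, ?_, ?_⟩
        · calc a * b * (b' * a') = a * (b * b') * a' := by noncomm_ring
            _ = 1 := by rw [hbb, Matrix.mul_one, haa]
        · calc b' * a' * (a * b) = b' * (a' * a) * b := by noncomm_ring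
            _ = 1 := by rw [haa', Matrix.mul_one, hbb']
        · have : fromBlocks (a * b) 0 0 ((b' * a')ᵀ) =
              fromBlocks a 0 0 a'ᵀ * fromBlocks b 0 0 b'ᵀ := by
            rw [fromBlocks_multiply, transpose_mul]
            simp
          rw [this]
          exact Submonoid.mul_mem _ hamem hbmem
      | mem m hmem =>
        obtain ⟨u, hu, y, hy, hcase⟩ := hmem
        rw [Set.mem_singleton_iff] at hy
        subst hy
        have hFF : Fmat g (⟨0, by omega⟩ : Fin g) * Fmat g ⟨0, by omega⟩ = 1 :=
          Fmat_mul_self _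
        have hFinv : (Fmat g (⟨0, by omega⟩ : Fin g))⁻¹ = Fmat g ⟨0, by omega⟩ :=
          inv_eq_right_inv hFF
        have hudet : IsUnit u.det := hu
        have huu : u * u⁻¹ = 1 := mul_nonsing_inv u hudet
        have huu' : u⁻¹ * u = 1 := nonsing_inv_mul u hudet
        have hmeq : m = u * Fmat g ⟨0, by omega⟩ * u⁻¹ := by
          rcases hcase with rfl | rfl
          · rfl
          · rw [hFinv]
        clear hcase
        have hkey : ∀ c d : Matrix (Fin g) (Fin g) ℤ, c * d = 1 →
            (u * c * u⁻¹) * (u * d * u⁻¹) = 1 := by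
          intro c d hcd
          calc (u * c * u⁻¹) * (u * d * u⁻¹) = u * (c * (u⁻¹ * u) * d) * u⁻¹ := by noncomm_ring
            _ = 1 := by rw [huu', Matrix.mul_one, hcd, Matrix.mul_one, huu]
        refine ⟨m, by rw [hmeq]; exact hkey _ _ hFF, by rw [hmeq]; exact hkey _ _ hFF, ?_⟩
        have hmt : mᵀ = (u⁻¹)ᵀ * Fmat g ⟨0, by omega⟩ * uᵀ := by
          rw [hmeq, transpose_mul, transpose_mul, Fmat_transpose]
          noncomm_ring
        have heq : fromBlocks m 0 0 mᵀ = phi u * Zmat g z * (phi u)⁻¹ := by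
          rw [Zmat, phi_conj_diag hudet, hmt, hmeq]
        rw [heq]
        exact Submonoid.subset_closure
          ⟨phi u, phi_mem hudet, Zmat g z, Set.mem_insert_of_mem _ rfl, Or.inl rfl⟩
    obtain ⟨A', hAA', hA'A, hdiag⟩ := step1 A hAGamma
    -- facts about C = B * Aᵀ
    have h1 : A * A⁻¹ = 1 := mul_nonsing_inv A hA
    have h1' : A⁻¹ * A = 1 := nonsing_inv_mul A hA
    have h2 : (A⁻¹)ᵀ * Aᵀ = 1 := by rw [← transpose_mul, h1, transpose_one]
    have h2' : Aᵀ * (A⁻¹)ᵀ = 1 := by rw [← transpose_mul, h1', transpose_one]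
    have hCsymm : (B * Aᵀ).IsSymm := by
      rw [Matrix.IsSymm, transpose_mul, transpose_transpose]
      calc A * Bᵀ = A * (Bᵀ * ((A⁻¹)ᵀ * Aᵀ)) := by rw [h2, Matrix.mul_one]
        _ = A * ((A⁻¹ * B)ᵀ * Aᵀ) := by rw [transpose_mul, Matrix.mul_assoc]
        _ = A * (A⁻¹ * B * Aᵀ) := by rw [hsymm.eq]
        _ = (A * A⁻¹) * (B * Aᵀ) := by noncomm_ring
        _ = B * Aᵀ := by rw [h1, Matrix.one_mul]
    have hBdvd : ∀ k l, (2 : ℤ) ∣ B k l := by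
      intro k l
      have := congrFun (congrFun hB2 k) l
      simpa [Matrix.map_apply, hfdef, ZMod.intCast_zmod_eq_zero_iff_dvd] using this
    have hCdvd : ∀ k l, (2 : ℤ) ∣ (B * Aᵀ) k l := by
      intro k l
      rw [Matrix.mul_apply]
      exact Finset.dvd_sum fun a _ => Dvd.dvd.mul_right (hBdvd k a) _
    set D : Matrix (Fin g) (Fin g) ℤ := Matrix.of fun k l => (B * Aᵀ) k l / 2 with hDdef
    have hD2 : D + D = B * Aᵀ := by
      ext k l
      show (B * Aᵀ) k l / 2 + (B * Aᵀ) k l / 2 = (B * Aᵀ) k l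
      rw [← two_mul]
      exact Int.mul_ediv_cancel' (hCdvd k l)
    have hDsymm : D.IsSymm := by
      ext k l
      show (B * Aᵀ) l k / 2 = (B * Aᵀ) k l / 2
      rw [hCsymm.apply]
    -- the additive subgroup H
    let H : AddSubgroup (Matrix (Fin g) (Fin g) ℤ) :=
      { carrier := {M | M.IsSymm ∧
          fromBlocks 1 (M + M) 0 1 ∈ ncl (urSpSet g) {Ymat g z z ^ 2, Zmat g z}}
        add_mem' := by
          rintro a b ⟨ha1, ha2⟩ ⟨hb1, hb2⟩
          refine ⟨Matrix.IsSymm.add ha1 hb1, ?_⟩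
          have : (fromBlocks 1 (a + b + (a + b)) 0 1 :
              Matrix (Fin g ⊕ Fin g) (Fin g ⊕ Fin g) ℤ) =
              fromBlocks 1 (a + a) 0 (1 : Matrix (Fin g) (Fin g) ℤ) *
              fromBlocks 1 (b + b) 0 1 := by
            rw [fromBlocks_multiply]
            refine fromBlocks_inj.mpr ⟨?_, ?_, ?_, ?_⟩ <;> simp <;> abel
          rw [this]
          exact Submonoid.mul_mem _ ha2 hb2
        zero_mem' := by
          refine ⟨isSymm_zero, ?_⟩
          rw [add_zero, fromBlocks_one]
          exact Submonoid.one_mem _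
        neg_mem' := by
          rintro M ⟨hM1, hM2⟩
          refine ⟨by rw [Matrix.IsSymm, transpose_neg, hM1.eq], ?_⟩
          obtain ⟨m', hm'mem, hmm', -⟩ := ncl_inv_pair hUdet hSinv hM2
          have : (fromBlocks 1 (M + M) 0 1 : Matrix (Fin g ⊕ Fin g) (Fin g ⊕ Fin g) ℤ) *
              fromBlocks 1 (-M + -M) 0 1 = 1 := by
            rw [fromBlocks_multiply, ← fromBlocks_one]
            refine fromBlocks_inj.mpr ⟨?_, ?_, ?_, ?_⟩ <;> simp <;> abel
          rw [Matrix.right_inv_eq_right_inv hmm' this] at hm'mem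
          exact hm'mem }
    -- conjugation stability of H
    have Hconj : ∀ u : Matrix (Fin g) (Fin g) ℤ, IsUnit u.det →
        ∀ M ∈ H, u * M * uᵀ ∈ H := by
      intro u hu M hM
      obtain ⟨hM1, hM2⟩ := hM
      constructor
      · rw [Matrix.IsSymm, transpose_mul, transpose_mul, transpose_transpose, hM1.eq,
          Matrix.mul_assoc]
      · have hconj := ncl_conj hUdet hUmul (phi_mem hu) hM2
        rw [phi_conj_upper hu] at hconj
        have : u * (M + M) * uᵀ = u * M * uᵀ + u * M * uᵀ := by
          rw [mul_add, add_mul]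
        rw [this] at hconj
        exact hconj
    -- S_{z,z} is in H
    have hSzz : Smat g z z ∈ H := by
      refine ⟨Smat_isSymm z z, ?_⟩
      rw [← Ymat_sq]
      exact Submonoid.subset_closure
        ⟨1, one_mem_urSp g, Ymat g z z ^ 2, Set.mem_insert _ _,
          Or.inl (by rw [inv_one, Matrix.one_mul, Matrix.mul_one])⟩
    -- all S_{i,i} are in H
    have hSii : ∀ i : Fin g, Smat g i i ∈ H := by
      intro i
      by_cases hi : i = z
      · rw [hi]; exact hSzz
      · have hne : z ≠ i := fun h => hi h.symm
        have hdet : IsUnit (Pmat z i).det :=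
          isUnit_det_of_right_inverse (Pmat_mul_self hne)
        have := Hconj (Pmat z i) hdet _ hSzz
        rw [Pmat_transpose, Smat_diag, Matrix.mul_assoc, Pmat_conj_diag hne, ← Smat_diag] at this
        exact this
    -- S_{z,j} for j ≠ z
    have hSzj : ∀ j : Fin g, z ≠ j → Smat g z j ∈ H := by
      intro j hj
      have hdet : IsUnit (1 + EE j z : Matrix (Fin g) (Fin g) ℤ).det :=
        isUnit_det_of_right_inverse (Umat_inv hj)
      have hc := Hconj (1 + EE j z) hdet _ hSzz
      rw [Smat_diag, Matrix.mul_assoc, Umat_conj hj] at hc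
      have heq : (EE z z + EE j j + (EE z j + EE j z) : Matrix (Fin g) (Fin g) ℤ) =
          Smat g z z + Smat g j j + Smat g z j := by
        rw [Smat_diag, Smat_diag, Smat_off hj]
      rw [heq] at hc
      have := H.sub_mem (H.sub_mem hc hSzz) (hSii j)
      have e : Smat g z z + Smat g j j + Smat g z j - Smat g z z - Smat g j j = Smat g z j := by
        abel
      rwa [e] at this
    -- all S_{i,j} are in H
    have hSij : ∀ i j : Fin g, Smat g i j ∈ H := by
      intro i j
      by_cases hij : i = j
      · rw [hij]; exact hSii j
      by_cases hiz : i = z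
      · subst hiz; exact hSzj j hij
      by_cases hjz : j = z
      · subst hjz; rw [Smat_comm]; exact hSzj i (fun h => hiz h.symm)
      · have hzi : z ≠ i := fun h => hiz h.symm
        have hzj : z ≠ j := fun h => hjz h.symm
        have hdet : IsUnit (Pmat z i).det :=
          isUnit_det_of_right_inverse (Pmat_mul_self hzi)
        have hc := Hconj (Pmat z i) hdet _ (hSzj j hzj)
        rw [Pmat_transpose, Smat_off hzj, Matrix.mul_assoc,
          Pmat_conj_S hzi hjz (fun h => hij h.symm), ← Smat_off hij] at hc
        exact hc
    -- decompose D as a sum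
    have hDsum : D = ∑ p : Fin g × Fin g,
        (if p.1 ≤ p.2 then D p.1 p.2 else 0) • Smat g p.1 p.2 := by
      ext k l
      rw [Matrix.sum_apply]
      simp only [Matrix.smul_apply, smul_eq_mul, Smat, Matrix.of_apply]
      rcases le_or_gt k l with hkl | hkl
      · rw [Finset.sum_eq_single (k, l)]
        · simp [hkl]
        · rintro ⟨a, b⟩ - hne
          by_cases hab : a ≤ b
          · rw [if_pos hab, mul_ite, mul_one, mul_zero, if_neg]
            rintro (⟨rfl, rfl⟩ | ⟨rfl, rfl⟩)
            · exact hne rfl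
            · exact hne (by rw [le_antisymm hkl hab])
          · rw [if_neg hab, zero_mul]
        · intro h; exact absurd (Finset.mem_univ _) h
      · rw [Finset.sum_eq_single (l, k)]
        · rw [if_pos hkl.le, mul_ite, mul_one, mul_zero, if_pos (Or.inr ⟨rfl, rfl⟩)]
          exact (hDsymm.apply k l).symm ▸ rfl
        · rintro ⟨a, b⟩ - hne
          by_cases hab : a ≤ b
          · rw [if_pos hab, mul_ite, mul_one, mul_zero, if_neg]
            rintro (⟨rfl, rfl⟩ | ⟨rfl, rfl⟩)
            · exact absurd hab (not_le.mpr hkl)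
            · exact hne rfl
          · rw [if_neg hab, zero_mul]
        · intro h; exact absurd (Finset.mem_univ _) h
    have hDH : D ∈ H := by
      rw [hDsum]
      exact AddSubgroup.sum_mem H fun p _ => AddSubgroup.zsmul_mem H (hSij p.1 p.2) _
    have hupper : fromBlocks 1 (B * Aᵀ) 0 1 ∈
        ncl (urSpSet g) {Ymat g z z ^ 2, Zmat g z} := by
      have := hDH.2
      rwa [hD2] at this
    -- final assembly
    have hA'inv : A' = A⁻¹ := (inv_eq_right_inv hAA').symm
    have hfinal : fromBlocks A B 0 (A⁻¹)ᵀ =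
        (fromBlocks 1 (B * Aᵀ) 0 1 : Matrix (Fin g ⊕ Fin g) (Fin g ⊕ Fin g) ℤ) *
          fromBlocks A 0 0 A'ᵀ := by
      rw [fromBlocks_multiply, hA'inv]
      exact fromBlocks_inj.mpr ⟨by simp, by simp [Matrix.mul_assoc, h2'], by simp, by simp⟩
    rw [hfinal]
    exact Submonoid.mul_mem _ hupper hdiag
  · -- easy direction
    intro X hX
    rw [mem_ncl_iff] at hX
    induction hX using Submonoid.closure_induction with
    | one => exact ⟨one_mem_urSp g, mapf_one⟩
    | mul a b _ _ iha ihb =>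
      refine ⟨mul_mem_urSp iha.1 ihb.1, ?_⟩
      rw [show ((a * b).map f) = a.map f * b.map f from mapf_mul a b, iha.2, ihb.2,
        Matrix.one_mul]
    | mem m hmem =>
      obtain ⟨u, hu, y, hy, hcase⟩ := hmem
      have hyur : y ∈ urSpSet g := hSmem y hy
      have hymap : y.map f = 1 := hSmap y hy
      have huinv := inv_mem_urSp hu
      have hyinv := inv_mem_urSp hyur
      have hyimap : (y⁻¹).map f = 1 := by
        have h := mapf_mul y y⁻¹
        rw [hyinv.2.1, mapf_one, hymap, Matrix.one_mul] at h
        exact h.symm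
      have humap : u.map f * (u⁻¹).map f = 1 := by
        rw [← mapf_mul, huinv.2.1, mapf_one]
      rcases hcase with rfl | rfl
      · refine ⟨mul_mem_urSp (mul_mem_urSp hu hyur) huinv.1, ?_⟩
        show (u * y * u⁻¹).map f = 1
        rw [mapf_mul, mapf_mul, hymap, Matrix.mul_one, humap]
      · refine ⟨mul_mem_urSp (mul_mem_urSp hu hyinv.1) huinv.1, ?_⟩
        show (u * y⁻¹ * u⁻¹).map f = 1
        rw [mapf_mul, mapf_mul, hyimap, Matrix.mul_one, humap]
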